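/- The linear map T_j : V(ε_1) ⊗ (A⊗V)_{⟨j⟩} → (A⊗V)_{⟨j+1⟩} defined by T_j(e_i' ⊗ w) = p_i.w is a gl(n)-module homomorphism (intertwining operator), where {e_1',...,e_n'} is the standard basis of the natural gl(n)-module V(ε_1) and gl(n) acts on A⊗V via x_i∂_{x_j} ↦ (polynomial action) ⊗ Id + Id ⊗ E_{i,j}. -/

import Mathlib

open MvPolynomial TensorProduct

noncomputable section

variable (F : Type) [Field F] (n : ℕ)

/-- Standard matrix units E_{i,j} of gl(n,F). -/
def EE (i j : Fin n) : Matrix (Fin n) (Fin n) F := Matrix.single i j 1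

/-- x_i ∂_{x_j} as a linear endomorphism of F[x_1,…,x_n]. -/
def xdL (i j : Fin n) : MvPolynomial (Fin n) F →ₗ[F] MvPolynomial (Fin n) F :=
  (((X i : MvPolynomial (Fin n) F) • pderiv j :
    Derivation F (MvPolynomial (Fin n) F) (MvPolynomial (Fin n) F))).toLinearMap

/-- ∂_{x_j}. -/
def ddL (j : Fin n) : MvPolynomial (Fin n) F →ₗ[F] MvPolynomial (Fin n) F :=
  ((pderiv j : Derivation F (MvPolynomial (Fin n) F) (MvPolynomial (Fin n) F))).toLinearMap

/-- p_i = x_i Σ_r x_r ∂_{x_r}. -/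
def ptL (i : Fin n) : MvPolynomial (Fin n) F →ₗ[F] MvPolynomial (Fin n) F :=
  (((X i : MvPolynomial (Fin n) F) •
      ∑ r : Fin n, ((X r : MvPolynomial (Fin n) F) • pderiv r :
        Derivation F (MvPolynomial (Fin n) F) (MvPolynomial (Fin n) F)) :
    Derivation F (MvPolynomial (Fin n) F) (MvPolynomial (Fin n) F))).toLinearMap

variable (V : Type) [AddCommGroup V] [Module F V]
variable (ρ : Matrix (Fin n) (Fin n) F →ₗ[F] Module.End F V)

/-- Action (3.10) of x_i∂_{x_j} on A ⊗ V. -/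
def opX (i j : Fin n) : Module.End F (MvPolynomial (Fin n) F ⊗[F] V) :=
  TensorProduct.map (xdL F n i j) LinearMap.id +
    TensorProduct.map LinearMap.id (ρ (EE F n i j))

/-- Action (3.11) of ∂_{x_i} on A ⊗ V. -/
def opD (i : Fin n) : Module.End F (MvPolynomial (Fin n) F ⊗[F] V) :=
  TensorProduct.map (ddL F n i) LinearMap.id

/-- Action (3.12) of p_i on A ⊗ V. -/
def opP (i : Fin n) : Module.End F (MvPolynomial (Fin n) F ⊗[F] V) :=
  TensorProduct.map (ptL F n i) LinearMap.id +
    TensorProduct.map (LinearMap.mulLeft F (X i)) (ρ (1 : Matrix (Fin n) (Fin n) F)) +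
    ∑ j : Fin n, TensorProduct.map (LinearMap.mulLeft F (X j)) (ρ (EE F n i j))

/-- The subspace U(P)(1 ⊗ V). -/
def UP : Submodule F (MvPolynomial (Fin n) F ⊗[F] V) :=
  Submodule.span F
    {w | ∃ (l : List (Fin n)) (v : V),
      w = l.foldr (fun t u => opP F n V ρ t u) ((1 : MvPolynomial (Fin n) F) ⊗ₜ[F] v)}

/-- The degree-k homogeneous component (A ⊗ V)_{⟨k⟩}. -/
def Deg (k : ℕ) : Submodule F (MvPolynomial (Fin n) F ⊗[F] V) :=
  Submodule.span F
    {w | ∃ (c : Fin n →₀ ℕ) (v : V), (∑ i, c i) = k ∧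
      w = (monomial c (1 : F)) ⊗ₜ[F] v}

/-- W is an L_{n+1}-submodule of A ⊗ V. -/
def IsLSubmodule (W : Submodule F (MvPolynomial (Fin n) F ⊗[F] V)) : Prop :=
  ∀ w ∈ W, (∀ i j : Fin n, opX F n V ρ i j w ∈ W) ∧
    (∀ i : Fin n, opD F n V i w ∈ W) ∧ (∀ i : Fin n, opP F n V ρ i w ∈ W)

/-- ρ is a representation of gl(n,F). -/
def IsGlRep : Prop :=
  ∀ X Y : Matrix (Fin n) (Fin n) F, ρ (X * Y - Y * X) = ρ X * ρ Y - ρ Y * ρ X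

/-- Irreducibility of the gl(n)-module V. -/
def IsIrreducibleRep : Prop :=
  (∃ v : V, v ≠ 0) ∧
  ∀ U : Submodule F V, (∀ X : Matrix (Fin n) (Fin n) F, ∀ u ∈ U, ρ X u ∈ U) →
    U = ⊥ ∨ U = ⊤

/-- v is a highest weight vector of weight μ in V. -/
def IsHWVector (μ : Fin n → F) (v : V) : Prop :=
  v ≠ 0 ∧ (∀ i : Fin n, ρ (EE F n i i) v = μ i • v) ∧
    ∀ i j : Fin n, i < j → ρ (EE F n i j) v = 0

/-- The index set I(μ,j) of (2.11). -/
def Iset (μ : Fin n → F) (j : ℕ) : Set (Fin n → ℕ) :=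
  {c | (∑ i, c i) = j ∧
    ∀ s t : Fin n, (s : ℕ) + 1 = (t : ℕ) →
      ∃ m : ℕ, μ s - μ t = (m : F) ∧ c t ≤ m}

/-- The scalar q_c of Lemma 3.2.3. -/
def qc (μ : Fin n → F) (c : Fin n → ℕ) : F :=
  ∏ s : Fin n, ∏ i ∈ Finset.range (c s),
    (μ s + (∑ j, μ j) - ((s : ℕ) + 1) + (i + 1))

/- ---------- Auxiliary lemmas for T_is_intertwiner ---------- -/

lemma dsum_apply {ι : Type} (s : Finset ι)
    (D : ι → Derivation F (MvPolynomial (Fin n) F) (MvPolynomial (Fin n) F))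
    (a : MvPolynomial (Fin n) F) :
    (∑ r ∈ s, D r) a = ∑ r ∈ s, D r a := by
  induction s using Finset.cons_induction with
  | empty => simp
  | cons i s hi ih => rw [Finset.sum_cons, Derivation.add_apply, ih, Finset.sum_cons]

lemma xd_app_X (s t i : Fin n) :
    ((X s : MvPolynomial (Fin n) F) • pderiv t :
      Derivation F (MvPolynomial (Fin n) F) (MvPolynomial (Fin n) F)) (X i)
      = if t = i then X s else 0 := by
  rw [Derivation.smul_apply, pderiv_X]
  by_cases h : t = i <;> simp [h, Pi.single_apply]

lemma euler_app_X (i : Fin n) :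
    (∑ r : Fin n, ((X r : MvPolynomial (Fin n) F) • pderiv r :
      Derivation F (MvPolynomial (Fin n) F) (MvPolynomial (Fin n) F))) (X i) = X i := by
  rw [dsum_apply]
  rw [Finset.sum_congr rfl fun r _ => xd_app_X F n r r i]
  simp

lemma pt_app_X (k i : Fin n) :
    ((X k : MvPolynomial (Fin n) F) •
      ∑ r : Fin n, ((X r : MvPolynomial (Fin n) F) • pderiv r :
        Derivation F (MvPolynomial (Fin n) F) (MvPolynomial (Fin n) F)) :
      Derivation F (MvPolynomial (Fin n) F) (MvPolynomial (Fin n) F)) (X i)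
      = X k * X i := by
  rw [Derivation.smul_apply, euler_app_X]
  rw [smul_eq_mul]

lemma xd_pt_comm (s t k : Fin n) (f : MvPolynomial (Fin n) F) :
    xdL F n s t (ptL F n k f)
      = ptL F n k (xdL F n s t f) + (if t = k then ptL F n s f else 0) := by
  have hbr : (⁅((X s : MvPolynomial (Fin n) F) • pderiv t :
        Derivation F (MvPolynomial (Fin n) F) (MvPolynomial (Fin n) F)),
      ((X k : MvPolynomial (Fin n) F) •
        ∑ r : Fin n, ((X r : MvPolynomial (Fin n) F) • pderiv r :
          Derivation F (MvPolynomial (Fin n) F) (MvPolynomial (Fin n) F)))⁆ :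
      Derivation F (MvPolynomial (Fin n) F) (MvPolynomial (Fin n) F))
      = if t = k then ((X s : MvPolynomial (Fin n) F) •
        ∑ r : Fin n, ((X r : MvPolynomial (Fin n) F) • pderiv r :
          Derivation F (MvPolynomial (Fin n) F) (MvPolynomial (Fin n) F))) else 0 := by
    apply MvPolynomial.derivation_ext
    intro i
    rw [Derivation.commutator_apply, pt_app_X, Derivation.leibniz, xd_app_X, xd_app_X]
    by_cases htk : t = k
    · subst htk
      by_cases hti : t = i
      · subst hti
        simp only [if_pos rfl, pt_app_X]
        simp [smul_eq_mul, euler_app_X]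
        ring
      · simp only [if_pos rfl, if_neg hti, pt_app_X]
        simp [smul_eq_mul, euler_app_X]
        ring
    · by_cases hti : t = i
      · subst hti
        simp only [if_pos rfl, if_neg htk, pt_app_X, Derivation.zero_apply]
        simp [smul_eq_mul, euler_app_X]
      · simp [hti, htk]
  have h2 := congrArg
    (fun D : Derivation F (MvPolynomial (Fin n) F) (MvPolynomial (Fin n) F) => D f) hbr
  simp only [Derivation.commutator_apply] at h2
  simp only [xdL, ptL, Derivation.coeFn_coe]
  by_cases h : t = k
  · rw [if_pos h] at h2 ⊢
    linear_combination h2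
  · rw [if_neg h] at h2 ⊢
    rw [Derivation.zero_apply] at h2
    linear_combination h2

lemma xd_mul_comm (s t j : Fin n) (f : MvPolynomial (Fin n) F) :
    xdL F n s t (X j * f)
      = X j * xdL F n s t f + (if t = j then X s * f else 0) := by
  simp only [xdL, Derivation.coeFn_coe]
  rw [Derivation.leibniz, xd_app_X]
  by_cases h : t = j <;> simp [h, Derivation.smul_apply, smul_eq_mul] <;> ring

lemma EE_mul (s t k j : Fin n) :
    EE F n s t * EE F n k j = if t = k then EE F n s j else 0 := by
  unfold EE
  by_cases h : t = k
  · subst h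
    rw [if_pos rfl, Matrix.single_mul_single_same, one_mul]
  · rw [if_neg h]
    simp [h]

lemma rho_one_comm (hρ : IsGlRep F n V ρ) (s t : Fin n) (v : V) :
    ρ (EE F n s t) (ρ 1 v) = ρ 1 (ρ (EE F n s t) v) := by
  have h := hρ (EE F n s t) 1
  rw [mul_one, one_mul, sub_self, map_zero] at h
  have h2 := congrArg (fun L : Module.End F V => L v) h
  simp only [LinearMap.sub_apply, Module.End.mul_apply, LinearMap.zero_apply] at h2
  exact sub_eq_zero.mp h2.symm

lemma rho_comm (hρ : IsGlRep F n V ρ) (s t k j : Fin n) (v : V) :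
    ρ (EE F n s t) (ρ (EE F n k j) v)
      = ρ (EE F n k j) (ρ (EE F n s t) v)
        + ((if t = k then ρ (EE F n s j) v else 0)
            - (if j = s then ρ (EE F n k t) v else 0)) := by
  have h := hρ (EE F n s t) (EE F n k j)
  rw [EE_mul, EE_mul] at h
  have h2 : ρ ((if t = k then EE F n s j else 0) : Matrix (Fin n) (Fin n) F) v
      - ρ ((if j = s then EE F n k t else 0) : Matrix (Fin n) (Fin n) F) v
      = ρ (EE F n s t) (ρ (EE F n k j) v) - ρ (EE F n k j) (ρ (EE F n s t) v) := by
    have h2' := congrArg (fun L : Module.End F V => L v) h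
    simpa only [map_sub, LinearMap.sub_apply, Module.End.mul_apply] using h2'
  have h4 := eq_add_of_sub_eq h2.symm
  rw [h4]
  by_cases h1 : t = k <;> by_cases h3 : j = s <;> simp [h1, h3] <;> abel

set_option maxHeartbeats 2000000 in
lemma opX_opP_comm (hρ : IsGlRep F n V ρ) (s t k : Fin n)
    (w : MvPolynomial (Fin n) F ⊗[F] V) :
    opX F n V ρ s t (opP F n V ρ k w)
      = opP F n V ρ k (opX F n V ρ s t w)
        + (if t = k then opP F n V ρ s w else 0) := by
  induction w using TensorProduct.induction_on with
  | zero => simp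
  | add x y hx hy =>
    rw [map_add, map_add, hx, hy, map_add, map_add]
    by_cases h : t = k <;> simp [h] <;> abel
  | tmul f v =>
    simp only [opX, opP, LinearMap.add_apply, LinearMap.coe_sum, Finset.sum_apply,
      TensorProduct.map_tmul, LinearMap.id_coe, id_eq, LinearMap.mulLeft_apply,
      map_add, map_sum]
    rw [xd_pt_comm]
    simp only [xd_mul_comm, rho_one_comm F n V ρ hρ, rho_comm F n V ρ hρ s t k]
    by_cases h : t = k
    · subst h
      simp only [if_pos rfl, TensorProduct.tmul_add, TensorProduct.add_tmul,
        TensorProduct.tmul_sub, ite_tmul, tmul_ite, TensorProduct.tmul_zero,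
        TensorProduct.zero_tmul, Finset.sum_add_distrib, Finset.sum_sub_distrib,
        Finset.sum_ite_eq, Finset.sum_ite_eq', Finset.mem_univ, if_true]
      abel
    · simp only [if_neg h, zero_sub, TensorProduct.tmul_add, TensorProduct.add_tmul,
        TensorProduct.tmul_sub, TensorProduct.tmul_neg, ite_tmul, tmul_ite,
        TensorProduct.tmul_zero, TensorProduct.zero_tmul, Finset.sum_add_distrib,
        Finset.sum_sub_distrib, Finset.sum_neg_distrib,
        Finset.sum_ite_eq, Finset.sum_ite_eq', Finset.mem_univ, if_true, add_zero]
      abel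

lemma mulVecLin_single (s t k : Fin n) :
    (Matrix.single s t (1 : F)).mulVecLin (Pi.single k (1 : F))
      = if t = k then Pi.single s (1 : F) else 0 := by
  rw [Matrix.mulVecLin_apply, Matrix.single_mulVec]
  by_cases h : t = k
  · subst h
    simp only [if_pos rfl, Pi.single_eq_same, mul_one]
    rfl
  · rw [if_neg h, Pi.single_eq_of_ne h, mul_zero]
    simp

/-- Lemma 3.3.7: T_j(e_i' ⊗ w) = p_i.w is an intertwining operator for gl(n) from
V(ε₁) ⊗ (A⊗V) to A⊗V. -/
theorem T_is_intertwiner [CharZero F]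
    (hρ : IsGlRep F n V ρ)
    (T : ((Fin n → F) ⊗[F] (MvPolynomial (Fin n) F ⊗[F] V)) →ₗ[F]
      (MvPolynomial (Fin n) F ⊗[F] V))
    (hT : ∀ (i : Fin n) (w : MvPolynomial (Fin n) F ⊗[F] V),
      T ((Pi.single i (1 : F)) ⊗ₜ[F] w) = opP F n V ρ i w) :
    ∀ (s t : Fin n) (u : (Fin n → F) ⊗[F] (MvPolynomial (Fin n) F ⊗[F] V)),
      T (TensorProduct.map ((Matrix.single s t (1 : F)).mulVecLin) LinearMap.id u
          + TensorProduct.map LinearMap.id (opX F n V ρ s t) u)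
        = opX F n V ρ s t (T u) := by
  intro s t u
  have base : ∀ (k : Fin n) (w : MvPolynomial (Fin n) F ⊗[F] V),
      T (TensorProduct.map ((Matrix.single s t (1 : F)).mulVecLin) LinearMap.id
          ((Pi.single k (1 : F)) ⊗ₜ[F] w)
        + TensorProduct.map LinearMap.id (opX F n V ρ s t)
          ((Pi.single k (1 : F)) ⊗ₜ[F] w))
      = opX F n V ρ s t (T ((Pi.single k (1 : F)) ⊗ₜ[F] w)) := by
    intro k w
    rw [TensorProduct.map_tmul, TensorProduct.map_tmul, mulVecLin_single,
      LinearMap.id_coe, id_eq, LinearMap.id_coe, id_eq, ite_tmul, map_add,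
      apply_ite T, map_zero, hT, hT, hT, opX_opP_comm F n V ρ hρ s t k]
    by_cases h : t = k <;> simp [h] <;> abel
  induction u using TensorProduct.induction_on with
  | zero => simp
  | add x y hx hy =>
    rw [map_add (TensorProduct.map ((Matrix.single s t (1 : F)).mulVecLin)
          (LinearMap.id : Module.End F (MvPolynomial (Fin n) F ⊗[F] V))) x y,
      map_add (TensorProduct.map (LinearMap.id : Module.End F (Fin n → F))
          (opX F n V ρ s t)) x y,
      add_add_add_comm, map_add T, hx, hy, map_add T x y, map_add]
  | tmul g w =>
    have hg : g = ∑ i : Fin n, g i • (Pi.single i (1 : F) : Fin n → F) := by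
      conv_lhs => rw [← Finset.univ_sum_single g]
      refine Finset.sum_congr rfl fun i _ => ?_
      rw [← Pi.single_smul, smul_eq_mul, mul_one]
    rw [hg, TensorProduct.sum_tmul]
    simp only [map_sum, ← Finset.sum_add_distrib]
    refine Finset.sum_congr rfl fun k _ => ?_
    rw [← TensorProduct.smul_tmul']
    simp only [map_smul]
    rw [← smul_add]
    simp only [map_smul]
    rw [base k w]

end
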